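/- Let U_1,...,U_n be independent uniform random variables on [-1,1] and X = (1/n)∑ U_i. Then for every t in (-1,1), P(X > t)^{1/n} < sqrt(1 - m_X(t)^2), where m_X(t) = E[X | X > t]. -/

import Mathlib

open MeasureTheory Set

/-- The distribution of `n` i.i.d. uniform random variables on `[-1,1]`. -/
noncomputable def unifCube (n : ℕ) : Measure (Fin n → ℝ) :=
  Measure.pi fun _ => (2 : ENNReal)⁻¹ • volume.restrict (Icc (-1 : ℝ) 1)

/-- `X = (1/n) ∑ᵢ Uᵢ`, the average of the coordinates. -/
noncomputable def avgCoord (n : ℕ) (u : Fin n → ℝ) : ℝ := (∑ i, u i) / n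

/-- `p_X(t) = P(X > t)`. -/
noncomputable def tailP (n : ℕ) (t : ℝ) : ℝ :=
  (unifCube n {u | t < avgCoord n u}).toReal

/-- `m_X(t) = E[X ∣ X > t]`, the truncated mean. -/
noncomputable def truncMean (n : ℕ) (t : ℝ) : ℝ :=
  (∫ u in {u | t < avgCoord n u}, avgCoord n u ∂(unifCube n)) / tailP n t

noncomputable abbrev mu0 : Measure ℝ := (2 : ENNReal)⁻¹ • volume.restrict (Icc (-1 : ℝ) 1)

instance mu0_prob : IsProbabilityMeasure mu0 := by
  constructor
  rw [Measure.smul_apply, Measure.restrict_apply_univ, Real.volume_Icc, smul_eq_mul]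
  rw [show (1 : ℝ) - (-1) = 2 by norm_num]
  rw [ENNReal.ofReal_ofNat]
  exact ENNReal.inv_mul_cancel (by norm_num) (by norm_num)

instance unifCube_prob (n : ℕ) : IsProbabilityMeasure (unifCube n) := by
  unfold unifCube; infer_instance

lemma meas_avg (n : ℕ) : Measurable (avgCoord n) := by
  unfold avgCoord
  exact (Finset.measurable_sum Finset.univ fun i _ => measurable_pi_apply i).div_const _

lemma measA (n : ℕ) (t : ℝ) : MeasurableSet {u : Fin n → ℝ | t < avgCoord n u} :=
  measurableSet_lt measurable_const (meas_avg n)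

lemma ae_cube (n : ℕ) : ∀ᵐ u ∂unifCube n, ∀ i, u i ∈ Icc (-1:ℝ) 1 := by
  rw [ae_all_iff]
  intro i
  have h0 : mu0 (Icc (-1:ℝ) 1)ᶜ = 0 := by
    rw [Measure.smul_apply, Measure.restrict_apply measurableSet_Icc.compl]
    simp
  have h1 := Measure.pi_eval_preimage_null (μ := fun _ : Fin n => mu0) (i := i) h0
  rw [ae_iff]
  exact h1

lemma ae_avg_bound (n : ℕ) (hn : 0 < n) : ∀ᵐ u ∂unifCube n, |avgCoord n u| ≤ 1 := by
  filter_upwards [ae_cube n] with u hu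
  unfold avgCoord
  have hnpos : (0:ℝ) < n := by exact_mod_cast hn
  rw [abs_div, abs_of_pos hnpos, div_le_one hnpos]
  calc |∑ i, u i| ≤ ∑ i, |u i| := Finset.abs_sum_le_sum_abs _ _
    _ ≤ ∑ _i : Fin n, (1:ℝ) := Finset.sum_le_sum fun i _ => abs_le.2 ⟨(hu i).1, (hu i).2⟩
    _ = n := by simp

lemma integrable_of_bound {n : ℕ} (f : (Fin n → ℝ) → ℝ) (hf : Measurable f) (C : ℝ)
    (h : ∀ᵐ u ∂unifCube n, ‖f u‖ ≤ C) : Integrable f (unifCube n) :=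
  Integrable.mono' (integrable_const C) hf.aestronglyMeasurable h

lemma integrable_avg (n : ℕ) (hn : 0 < n) : Integrable (avgCoord n) (unifCube n) :=
  integrable_of_bound _ (meas_avg n) 1
    ((ae_avg_bound n hn).mono fun u h => by rwa [Real.norm_eq_abs])

lemma integrable_eval (n : ℕ) (i : Fin n) : Integrable (fun u : Fin n → ℝ => u i) (unifCube n) :=
  integrable_of_bound _ (measurable_pi_apply i) 1
    ((ae_cube n).mono fun u h => by
      rw [Real.norm_eq_abs]; exact abs_le.2 ⟨(h i).1, (h i).2⟩)

lemma integrable_exp_avg (n : ℕ) (hn : 0 < n) (c : ℝ) :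
    Integrable (fun u => Real.exp (c * avgCoord n u)) (unifCube n) := by
  refine integrable_of_bound _ (((meas_avg n).const_mul c).exp) (Real.exp |c|)
    ((ae_avg_bound n hn).mono fun u h => ?_)
  rw [Real.norm_eq_abs, abs_of_pos (Real.exp_pos _)]
  apply Real.exp_le_exp.2
  calc c * avgCoord n u ≤ |c * avgCoord n u| := le_abs_self _
    _ = |c| * |avgCoord n u| := abs_mul _ _
    _ ≤ |c| * 1 := mul_le_mul_of_nonneg_left h (abs_nonneg c)
    _ = |c| := mul_one _

lemma int_mu0_id : ∫ x, x ∂mu0 = 0 := by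
  rw [integral_smul_measure]
  have h1 : ∫ x in Icc (-1:ℝ) 1, (x:ℝ) ∂volume = 0 := by
    rw [integral_Icc_eq_integral_Ioc,
      ← _root_.intervalIntegral.integral_of_le (by norm_num : (-1:ℝ) ≤ 1)]
    simp [_root_.integral_id]
  rw [h1, smul_zero]

lemma int_mu0_exp (l : ℝ) (hl : l ≠ 0) : ∫ x, Real.exp (l*x) ∂mu0 = Real.sinh l / l := by
  rw [integral_smul_measure]
  have h1 : ∫ x in Icc (-1:ℝ) 1, Real.exp (l*x) ∂volume
      = l⁻¹ * (Real.exp l - Real.exp (-l)) := by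
    rw [integral_Icc_eq_integral_Ioc,
      ← _root_.intervalIntegral.integral_of_le (by norm_num : (-1:ℝ) ≤ 1)]
    rw [_root_.intervalIntegral.integral_comp_mul_left (fun x => Real.exp x) hl]
    rw [_root_.integral_exp]
    rw [smul_eq_mul, mul_one, mul_neg_one]
  rw [h1, Real.sinh_eq]
  have h2 : ((2:ENNReal)⁻¹).toReal = 1/2 := by simp
  rw [h2, smul_eq_mul]
  field_simp

lemma mgf_prod (n : ℕ) (l : ℝ) :
    ∫ u, Real.exp (l * ∑ i, u i) ∂unifCube n = (∫ x, Real.exp (l*x) ∂mu0)^n := by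
  letI : MeasureSpace ℝ := ⟨mu0⟩
  haveI : IsProbabilityMeasure (volume : Measure ℝ) := mu0_prob
  have h1 : unifCube n = (volume : Measure (Fin n → ℝ)) := by
    rw [MeasureTheory.volume_pi]; rfl
  rw [h1]
  have h2 : (fun u : Fin n → ℝ => Real.exp (l * ∑ i, u i))
      = fun u => ∏ i, Real.exp (l * u i) := by
    funext u; rw [← Real.exp_sum, Finset.mul_sum]
  rw [h2]
  rw [MeasureTheory.volume_pi, MeasureTheory.integral_fintype_prod_eq_pow (fun x : ℝ => Real.exp (l*x))]
  rw [Fintype.card_fin]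
  rfl

lemma int_eval (n : ℕ) (i : Fin n) : ∫ u, u i ∂unifCube n = 0 := by
  letI : MeasureSpace ℝ := ⟨mu0⟩
  haveI : IsProbabilityMeasure (volume : Measure ℝ) := mu0_prob
  have h1 : unifCube n = (volume : Measure (Fin n → ℝ)) := by
    rw [MeasureTheory.volume_pi]; rfl
  rw [h1]
  have h2 : (fun u : Fin n → ℝ => u i)
      = fun u => ∏ j, (fun j x => if j = i then x else (1:ℝ)) j (u j) := by
    funext u
    simp only []
    rw [Finset.prod_ite_eq' Finset.univ i (fun j => u j)]
    simp
  rw [h2]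
  rw [MeasureTheory.volume_pi, MeasureTheory.integral_fintype_prod_eq_prod (fun j x => if j = i then x else (1:ℝ))]
  refine Finset.prod_eq_zero (Finset.mem_univ i) ?_
  simp only [if_pos rfl]
  exact int_mu0_id

lemma int_avg_zero (n : ℕ) (hn : 0 < n) : ∫ u, avgCoord n u ∂unifCube n = 0 := by
  unfold avgCoord
  rw [integral_div]
  rw [integral_finset_sum Finset.univ (fun i _ => integrable_eval n i)]
  simp [int_eval]

lemma pi_box_pos (n : ℕ) (x y : ℝ) (hxy : x < y) (hx : -1 ≤ x) (hy : y ≤ 1) :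
    0 < unifCube n (Set.pi univ fun _ => Ioo x y) := by
  rw [show unifCube n = Measure.pi fun _ : Fin n => mu0 from rfl, Measure.pi_pi]
  have h1 : mu0 (Ioo x y) = 2⁻¹ * ENNReal.ofReal (y - x) := by
    rw [Measure.smul_apply, Measure.restrict_apply measurableSet_Ioo, smul_eq_mul]
    congr 1
    have hsub : Ioo x y ⊆ Icc (-1:ℝ) 1 := fun z hz => ⟨le_trans hx hz.1.le, le_trans hz.2.le hy⟩
    rw [Set.inter_eq_left.2 hsub, Real.volume_Ioo]
  rw [h1]
  rw [Finset.prod_const]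
  have hne1 : ((2:ENNReal)⁻¹) ≠ 0 := ENNReal.inv_ne_zero.2 (by norm_num)
  have hne2 : ENNReal.ofReal (y - x) ≠ 0 := (ENNReal.ofReal_pos.2 (by linarith)).ne'
  exact ENNReal.pow_pos (ENNReal.mul_pos hne1 hne2) _



lemma expUB {x : ℝ} (h0 : 0 ≤ x) (h1 : x ≤ 1) :
    Real.exp x ≤ 1 + x + x^2/2 + x^3/6 + 5/96*x^4 := by
  have h := Real.exp_bound (x := x) (by rw [abs_of_nonneg h0]; exact h1) (n := 4) (by norm_num)
  rw [abs_of_nonneg h0] at h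
  have h2 := (abs_le.1 h).2
  simp [Finset.sum_range_succ, Nat.factorial] at h2
  nlinarith [h2]

lemma expLB {x : ℝ} (h0 : 0 ≤ x) (h1 : x ≤ 1) :
    1 - x + x^2/2 - x^3/6 - 5/96*x^4 ≤ Real.exp (-x) := by
  have h := Real.exp_bound (x := -x) (by rw [abs_neg, abs_of_nonneg h0]; exact h1) (n := 4) (by norm_num)
  rw [abs_neg, abs_of_nonneg h0] at h
  have h2 := (abs_le.1 h).1
  simp [Finset.sum_range_succ, Nat.factorial] at h2
  nlinarith [h2]

lemma exp32_lb : (223/1000 : ℝ) ≤ Real.exp (-(3/2)) := by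
  have h1 : Real.exp (3/2) * Real.exp (3/2) = Real.exp 1 ^ 3 := by
    rw [← Real.exp_add, ← Real.exp_nat_mul, mul_one]
    norm_num
  have h2 := Real.exp_one_lt_d9
  have hee : (0:ℝ) < Real.exp 1 := Real.exp_pos 1
  have h9 : Real.exp 1 ^ 3 < (2.7182818286:ℝ)^3 := pow_lt_pow_left₀ h2 hee.le (by norm_num)
  have h3 : Real.exp (3/2) ≤ 1000/223 := by
    nlinarith [Real.exp_pos (3/2 : ℝ)]
  have h5 : Real.exp (-(3/2)) * Real.exp (3/2) = 1 := by
    rw [← Real.exp_add]; norm_num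
  nlinarith [Real.exp_pos (-(3/2) : ℝ), Real.exp_pos (3/2 : ℝ)]

set_option maxHeartbeats 1600000 in
lemma core_ineq {m : ℝ} (h0 : 0 < m) (h1 : m < 1) :
    Real.exp (m/(1+m)) - Real.exp (-(m/(1-m))) ≤ 2*m / Real.sqrt (1-m^2) := by
  have h1m : (0:ℝ) < 1 - m := by linarith
  have h1p : (0:ℝ) < 1 + m := by linarith
  have hmm : (0:ℝ) < 1 - m^2 := by nlinarith
  set s := Real.sqrt (1-m^2) with hs
  have hs2 : s^2 = 1 - m^2 := Real.sq_sqrt hmm.le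
  have hs0 : 0 < s := Real.sqrt_pos.2 hmm
  rw [le_div_iff₀ hs0]
  set a := m/(1+m) with hadef
  set b := m/(1-m) with hbdef
  have ha0 : 0 ≤ a := by positivity
  have ha1 : a ≤ 1 := by rw [hadef, div_le_one h1p]; linarith
  have ha12 : a < 1/2 := by rw [hadef, div_lt_iff₀ h1p]; linarith
  have hb0 : 0 ≤ b := by positivity
  have hU := expUB ha0 ha1
  rcases le_or_gt m (1/2) with hc | hc
  · -- case m ≤ 1/2
    have hb1 : b ≤ 1 := by rw [hbdef, div_le_one h1m]; linarith
    have hL := expLB hb0 hb1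
    have key : ((1 + a + a^2/2 + a^3/6 + 5/96*a^4) - (1 - b + b^2/2 - b^3/6 - 5/96*b^4)) * s
        ≤ 2*m := by
      set Q : ℝ := (1 + a + a^2/2 + a^3/6 + 5/96*a^4) - (1 - b + b^2/2 - b^3/6 - 5/96*b^4)
        with hQdef
      have hval : Q = (192*m - 736*m^3 + 10*m^4 + 1024*m^5 + 60*m^6 - 480*m^7 + 10*m^8)
          / (96*(1-m^2)^4) := by
        rw [hQdef, hadef, hbdef]
        have e1 : (1:ℝ) + m ≠ 0 := h1p.ne'
        have e2 : (1:ℝ) - m ≠ 0 := h1m.ne'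
        field_simp
        ring
      rcases le_or_gt Q 0 with hQ | hQ
      · nlinarith
      · have hD : (0:ℝ) < (96*(1-m^2)^4)^2 := by positivity
        have hsq : (Q*s)^2 ≤ (2*m)^2 := by
          rw [mul_pow, hs2, hval, div_pow, div_mul_eq_mul_div, div_le_iff₀ hD]
          have h12 : (0:ℝ) ≤ 1 - 2*m := by linarith
          linarith [mul_nonneg (pow_nonneg h0.le 4) (pow_nonneg h12 14),
            mul_nonneg (pow_nonneg h0.le 5) (pow_nonneg h12 13),
            mul_nonneg (pow_nonneg h0.le 6) (pow_nonneg h12 12),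
            mul_nonneg (pow_nonneg h0.le 7) (pow_nonneg h12 11),
            mul_nonneg (pow_nonneg h0.le 8) (pow_nonneg h12 10),
            mul_nonneg (pow_nonneg h0.le 9) (pow_nonneg h12 9),
            mul_nonneg (pow_nonneg h0.le 10) (pow_nonneg h12 8),
            mul_nonneg (pow_nonneg h0.le 11) (pow_nonneg h12 7),
            mul_nonneg (pow_nonneg h0.le 12) (pow_nonneg h12 6),
            mul_nonneg (pow_nonneg h0.le 13) (pow_nonneg h12 5),
            mul_nonneg (pow_nonneg h0.le 14) (pow_nonneg h12 4),
            mul_nonneg (pow_nonneg h0.le 15) (pow_nonneg h12 3),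
            mul_nonneg (pow_nonneg h0.le 16) (pow_nonneg h12 2),
            mul_nonneg (pow_nonneg h0.le 17) (pow_nonneg h12 1),
            pow_nonneg h0.le 18]
        nlinarith [mul_pos hQ hs0]
    have hsub : Real.exp a - Real.exp (-b)
        ≤ (1 + a + a^2/2 + a^3/6 + 5/96*a^4) - (1 - b + b^2/2 - b^3/6 - 5/96*b^4) :=
      sub_le_sub hU hL
    have := mul_le_mul_of_nonneg_right hsub hs0.le
    linarith
  · rcases le_or_gt m (13/20) with hc2 | hc2
    · -- case 1/2 < m ≤ 13/20
      have hb137 : b ≤ 13/7 := by rw [hbdef, div_le_iff₀ h1m]; linarith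
      have hLlin : (223/1000) * (5/2 - b) ≤ Real.exp (-b) := by
        have h5 := Real.add_one_le_exp (3/2 - b)
        have h6 : Real.exp (-(3/2)) * (3/2 - b + 1) ≤ Real.exp (-(3/2)) * Real.exp (3/2 - b) :=
          mul_le_mul_of_nonneg_left h5 (Real.exp_pos _).le
        rw [← Real.exp_add] at h6
        have h7 : -(3/2) + (3/2 - b) = -b := by ring
        rw [h7] at h6
        have h8 : (223/1000 : ℝ) * (5/2 - b) ≤ Real.exp (-(3/2)) * (3/2 - b + 1) := by
          have := exp32_lb
          nlinarith
        linarith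
      have key : ((1 + a + a^2/2 + a^3/6 + 5/96*a^4) - (223/1000) * (5/2 - b)) * s ≤ 2*m := by
        set Q : ℝ := (1 + a + a^2/2 + a^3/6 + 5/96*a^4) - (223/1000) * (5/2 - b) with hQdef
        have hval : Q = (42480 + 244848*m + 410592*m^2 + 107488*m^3 - 276808*m^4 - 186072*m^5)
            / (96000*(1+m)^4*(1-m)) := by
          rw [hQdef, hadef, hbdef]
          have e1 : (1:ℝ) + m ≠ 0 := h1p.ne'
          have e2 : (1:ℝ) - m ≠ 0 := h1m.ne'
          field_simp
          ring
        rcases le_or_gt Q 0 with hQ | hQ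
        · nlinarith
        · have hD : (0:ℝ) < (96000*(1+m)^4*(1-m))^2 := by positivity
          have hsq : (Q*s)^2 ≤ (2*m)^2 := by
            rw [mul_pow, hs2, hval, div_pow, div_mul_eq_mul_div, div_le_iff₀ hD]
            have hl : (0:ℝ) ≤ m - 1/2 := by linarith
            have hr : (0:ℝ) ≤ 13/20 - m := by linarith
            linarith [mul_nonneg (pow_nonneg hl 0) (pow_nonneg hr 13),
              mul_nonneg (pow_nonneg hl 1) (pow_nonneg hr 12),
              mul_nonneg (pow_nonneg hl 2) (pow_nonneg hr 11),
              mul_nonneg (pow_nonneg hl 3) (pow_nonneg hr 10),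
              mul_nonneg (pow_nonneg hl 4) (pow_nonneg hr 9),
              mul_nonneg (pow_nonneg hl 5) (pow_nonneg hr 8),
              mul_nonneg (pow_nonneg hl 6) (pow_nonneg hr 7),
              mul_nonneg (pow_nonneg hl 7) (pow_nonneg hr 6),
              mul_nonneg (pow_nonneg hl 8) (pow_nonneg hr 5),
              mul_nonneg (pow_nonneg hl 9) (pow_nonneg hr 4),
              mul_nonneg (pow_nonneg hl 10) (pow_nonneg hr 3),
              mul_nonneg (pow_nonneg hl 11) (pow_nonneg hr 2),
              mul_nonneg (pow_nonneg hl 12) (pow_nonneg hr 1),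
              pow_nonneg hl 13]
          nlinarith [mul_pos hQ hs0]
      have hsub : Real.exp a - Real.exp (-b)
          ≤ (1 + a + a^2/2 + a^3/6 + 5/96*a^4) - (223/1000) * (5/2 - b) :=
        sub_le_sub hU hLlin
      have := mul_le_mul_of_nonneg_right hsub hs0.le
      linarith
    · -- case m > 13/20
      have hexp2a : Real.exp a * Real.exp a ≤ Real.exp 1 := by
        rw [← Real.exp_add]
        apply Real.exp_le_exp.2
        linarith
      have he := Real.exp_one_lt_d9
      have hsq : (Real.exp a * s)^2 ≤ (2*m)^2 := by
        have hrw : (Real.exp a * s)^2 = (Real.exp a * Real.exp a) * s^2 := by ring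
        rw [hrw, hs2]
        nlinarith [Real.exp_pos a]
      have hkey : Real.exp a * s ≤ 2*m := by
        nlinarith [mul_pos (Real.exp_pos a) hs0]
      have hsub : Real.exp a - Real.exp (-b) ≤ Real.exp a := by
        linarith [Real.exp_pos (-b)]
      have := mul_le_mul_of_nonneg_right hsub hs0.le
      linarith

lemma scalar_key {m : ℝ} (h0 : 0 < m) (h1 : m < 1) :
    ∃ l : ℝ, 0 < l ∧ Real.sinh l * Real.exp (-(l*m)) ≤ l * Real.sqrt (1-m^2) := by
  have h1m : (0:ℝ) < 1 - m := by linarith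
  have h1p : (0:ℝ) < 1 + m := by linarith
  have hmm : (0:ℝ) < 1 - m^2 := by nlinarith
  refine ⟨m/(1-m^2), by positivity, ?_⟩
  set l := m/(1-m^2) with hldef
  have hs0 : 0 < Real.sqrt (1-m^2) := Real.sqrt_pos.2 hmm
  have hs2 : Real.sqrt (1-m^2)^2 = 1-m^2 := Real.sq_sqrt hmm.le
  have hid : Real.sinh l * Real.exp (-(l*m))
      = (Real.exp (m/(1+m)) - Real.exp (-(m/(1-m)))) / 2 := by
    rw [Real.sinh_eq]
    rw [div_mul_eq_mul_div, sub_mul, ← Real.exp_add, ← Real.exp_add]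
    have e1 : l + -(l*m) = m/(1+m) := by
      rw [hldef]; field_simp; ring
    have e2 : -l + -(l*m) = -(m/(1-m)) := by
      rw [hldef]; field_simp; ring
    rw [e1, e2]
  have hrs : l * Real.sqrt (1-m^2) = m / Real.sqrt (1-m^2) := by
    rw [eq_div_iff hs0.ne', hldef, div_mul_eq_mul_div, div_mul_eq_mul_div, div_eq_iff hmm.ne',
      mul_assoc, Real.mul_self_sqrt hmm.le]
  rw [hid, hrs]
  have hcore := core_ineq h0 h1
  have h2 : (Real.exp (m/(1+m)) - Real.exp (-(m/(1-m))))/2 ≤ (2*m/Real.sqrt (1-m^2))/2 := by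
    linarith
  have h3 : (2*m/Real.sqrt (1-m^2))/2 = m / Real.sqrt (1-m^2) := by ring
  linarith [h2, h3.le, h3.ge]

set_option maxHeartbeats 1000000 in
theorem tailP_rpow_lt_sqrt (n : ℕ) (hn : 0 < n) :
    ∀ t ∈ Ioo (-1 : ℝ) 1,
      tailP n t ^ ((1 : ℝ) / n) < Real.sqrt (1 - truncMean n t ^ 2) := by
  intro t ht
  obtain ⟨ht1, ht2⟩ := ht
  have hnpos : (0:ℝ) < n := by exact_mod_cast hn
  haveI : Nonempty (Fin n) := ⟨⟨0, hn⟩⟩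
  set A := {u : Fin n → ℝ | t < avgCoord n u} with hAdef
  have hA : MeasurableSet A := measA n t
  have hintavg := integrable_avg n hn
  -- positivity of A and Aᶜ
  have hboxA : Set.pi univ (fun _ : Fin n => Ioo ((t+1)/2) 1) ⊆ A := by
    intro u hu
    have hsum : (n:ℝ) * ((t+1)/2) < ∑ i, u i := by
      calc (n:ℝ)*((t+1)/2) = ∑ _i : Fin n, ((t+1)/2) := by
            rw [Finset.sum_const]; simp [mul_comm]
        _ < ∑ i, u i :=
            Finset.sum_lt_sum_of_nonempty Finset.univ_nonempty
              fun i _ => (hu i (mem_univ i)).1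
    show t < avgCoord n u
    unfold avgCoord
    rw [lt_div_iff₀ hnpos]
    nlinarith
  have hboxAc : Set.pi univ (fun _ : Fin n => Ioo (-1) t) ⊆ Aᶜ := by
    intro u hu
    have hsum : ∑ i, u i < (n:ℝ) * t := by
      calc ∑ i, u i < ∑ _i : Fin n, t :=
            Finset.sum_lt_sum_of_nonempty Finset.univ_nonempty
              fun i _ => (hu i (mem_univ i)).2
        _ = (n:ℝ) * t := by rw [Finset.sum_const]; simp [mul_comm]
    intro hcon
    have : t < avgCoord n u := hcon
    unfold avgCoord at this
    rw [lt_div_iff₀ hnpos] at this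
    nlinarith
  have hpA : 0 < unifCube n A :=
    lt_of_lt_of_le (pi_box_pos n ((t+1)/2) 1 (by linarith) (by linarith) le_rfl)
      (measure_mono hboxA)
  have hpAc : 0 < unifCube n Aᶜ :=
    lt_of_lt_of_le (pi_box_pos n (-1) t ht1 le_rfl ht2.le) (measure_mono hboxAc)
  set p := tailP n t with hpdef
  have hPeq : p = (unifCube n A).toReal := rfl
  have hp0 : 0 < p := by rw [hPeq]; exact ENNReal.toReal_pos hpA.ne' (measure_ne_top _ _)
  have hsum1 : unifCube n A + unifCube n Aᶜ = 1 := by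
    rw [measure_add_measure_compl hA, measure_univ]
  have hq : (unifCube n Aᶜ).toReal = 1 - p := by
    have h := congrArg ENNReal.toReal hsum1
    rw [ENNReal.toReal_add (measure_ne_top _ _) (measure_ne_top _ _), ENNReal.toReal_one] at h
    rw [hPeq]; linarith
  have hq0 : 0 < 1 - p := by
    rw [← hq]; exact ENNReal.toReal_pos hpAc.ne' (measure_ne_top _ _)
  set I := ∫ u in A, avgCoord n u ∂unifCube n with hIdef
  set m := truncMean n t with hmdef
  have hm_eq : m = I / p := rfl
  have hmp : m * p = I := by rw [hm_eq]; exact div_mul_cancel₀ I hp0.ne'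
  -- t < m
  have hpos1 : 0 < ∫ u in A, (avgCoord n u - t) ∂unifCube n := by
    rw [setIntegral_pos_iff_support_of_nonneg_ae]
    · refine lt_of_lt_of_le hpA (measure_mono fun u hu => ?_)
      exact ⟨ne_of_gt (sub_pos.2 hu), hu⟩
    · exact (ae_restrict_iff' hA).2 (ae_of_all _ fun u hu => sub_nonneg.2 (le_of_lt hu))
    · exact (hintavg.sub (integrable_const t)).integrableOn
  have hIt : ∫ u in A, (avgCoord n u - t) ∂unifCube n = I - t * p := by
    rw [integral_sub hintavg.integrableOn
      (integrableOn_const (measure_ne_top _ _))]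
    rw [setIntegral_const, measureReal_def, smul_eq_mul, ← hPeq]
    ring
  have hmt : t < m := by
    rw [hm_eq, lt_div_iff₀ hp0]
    nlinarith [hpos1, hIt]
  -- m < 1
  have hone : unifCube n {u : Fin n → ℝ | avgCoord n u = 1} = 0 := by
    have hsub1 : {u : Fin n → ℝ | avgCoord n u = 1}
        ⊆ {u | ¬ ∀ i, u i ∈ Icc (-1:ℝ) 1} ∪ (Function.eval (⟨0, hn⟩ : Fin n) ⁻¹' {1}) := by
      intro u hu
      by_cases hc : ∀ i, u i ∈ Icc (-1:ℝ) 1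
      · right
        have hsum : ∑ i, u i = (n:ℝ) := by
          have h := hu
          simp only [mem_setOf_eq] at h
          unfold avgCoord at h
          field_simp at h
          linarith [h]
        by_contra hne
        have hne' : u ⟨0, hn⟩ ≠ 1 := hne
        have hlt : u ⟨0, hn⟩ < 1 := lt_of_le_of_ne (hc _).2 hne'
        have hslt : ∑ i, u i < ∑ _i : Fin n, (1:ℝ) :=
          Finset.sum_lt_sum (fun i _ => (hc i).2) ⟨⟨0, hn⟩, Finset.mem_univ _, hlt⟩
        rw [Finset.sum_const] at hslt
        simp at hslt
        rw [hsum] at hslt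
        exact absurd hslt (lt_irrefl _)
      · left; exact hc
    refine measure_mono_null hsub1 (measure_union_null ?_ ?_)
    · exact ae_iff.1 (ae_cube n)
    · refine Measure.pi_eval_preimage_null _ ?_
      rw [Measure.smul_apply, Measure.restrict_apply (measurableSet_singleton 1), smul_eq_mul]
      have hsing : volume ({(1:ℝ)} ∩ Icc (-1:ℝ) 1) = 0 :=
        measure_mono_null inter_subset_left Real.volume_singleton
      rw [hsing, mul_zero]
  have hpos2 : 0 < ∫ u in A, (1 - avgCoord n u) ∂unifCube n := by
    rw [setIntegral_pos_iff_support_of_nonneg_ae]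
    · refine lt_of_lt_of_le ?_ (measure_mono
        (?_ : A \ {u : Fin n → ℝ | avgCoord n u = 1} ⊆ _))
      · rw [measure_diff_null hone]; exact hpA
      · intro u hu
        refine ⟨?_, hu.1⟩
        have : avgCoord n u ≠ 1 := hu.2
        intro hz
        exact this (by linarith [sub_eq_zero.1 hz])
    · exact ae_restrict_of_ae ((ae_avg_bound n hn).mono fun u h => by
        have := (abs_le.1 h).2
        show (0:ℝ) ≤ 1 - avgCoord n u
        linarith)
    · exact ((integrable_const 1).sub hintavg).integrableOn
  have hI1 : ∫ u in A, (1 - avgCoord n u) ∂unifCube n = p - I := by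
    rw [integral_sub (integrableOn_const (C := (1:ℝ)) (measure_ne_top _ _))
      hintavg.integrableOn]
    rw [setIntegral_const, measureReal_def, smul_eq_mul, ← hPeq]
    ring
  have hm1 : m < 1 := by
    rw [hm_eq, div_lt_one hp0]
    nlinarith [hpos2, hI1]
  -- 0 < m
  have hm0 : 0 < m := by
    rcases le_or_gt 0 t with htpos | htneg
    · linarith
    · have hEX := int_avg_zero n hn
      have hcompl : I + ∫ u in Aᶜ, avgCoord n u ∂unifCube n = 0 :=
        (integral_add_compl hA hintavg).trans hEX
      have hupper : ∫ u in Aᶜ, avgCoord n u ∂unifCube n ≤ t * (1 - p) := by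
        have h5 := setIntegral_mono_on hintavg.integrableOn
          (integrableOn_const (measure_ne_top _ _)) hA.compl
          (fun u (hu : u ∈ Aᶜ) => le_of_not_gt hu)
        rw [setIntegral_const, measureReal_def, smul_eq_mul, hq] at h5
        linarith
      rw [hm_eq]
      apply div_pos _ hp0
      nlinarith
  -- Chernoff
  obtain ⟨l, hl0, hscal⟩ := scalar_key hm0 hm1
  set cc := l * n with hccdef
  have hcc0 : 0 < cc := mul_pos hl0 hnpos
  have hintexp := integrable_exp_avg n hn cc
  have hrwfun : (fun u : Fin n → ℝ => Real.exp (cc*m) * (1 + (cc * avgCoord n u - cc*m)))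
      = fun u => (Real.exp (cc*m) * (1 - cc*m)) + (Real.exp (cc*m) * cc) * avgCoord n u := by
    funext u; ring
  have hlhs_int : Integrable
      (fun u : Fin n → ℝ => Real.exp (cc*m) * (1 + (cc * avgCoord n u - cc*m)))
      (unifCube n) := by
    rw [hrwfun]
    exact (integrable_const _).add (hintavg.const_mul _)
  have hstep1 : Real.exp (cc*m) * p
      ≤ ∫ u in A, Real.exp (cc * avgCoord n u) ∂unifCube n := by
    have hptw : ∀ u ∈ A,
        Real.exp (cc*m) * (1 + (cc * avgCoord n u - cc*m))
          ≤ Real.exp (cc * avgCoord n u) := by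
      intro u _
      have h := Real.add_one_le_exp (cc * avgCoord n u - cc * m)
      have h2 := mul_le_mul_of_nonneg_left h (Real.exp_pos (cc*m)).le
      rw [← Real.exp_add] at h2
      have h3 : cc*m + (cc * avgCoord n u - cc*m) = cc * avgCoord n u := by ring
      rw [h3] at h2
      nlinarith [h2]
    have hmono := setIntegral_mono_on hlhs_int.integrableOn hintexp.integrableOn hA hptw
    have hval : ∫ u in A, (Real.exp (cc*m) * (1 + (cc * avgCoord n u - cc*m))) ∂unifCube n
        = Real.exp (cc*m) * p := by
      rw [hrwfun]
      rw [integral_add (integrableOn_const (C := Real.exp (cc*m) * (1 - cc*m)) (measure_ne_top _ _))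
        (hintavg.const_mul _).integrableOn]
      rw [setIntegral_const, measureReal_def, smul_eq_mul, integral_const_mul, ← hPeq, ← hIdef, ← hmp]
      ring
    linarith
  have hposc : 0 < ∫ u in Aᶜ, Real.exp (cc * avgCoord n u) ∂unifCube n := by
    rw [setIntegral_pos_iff_support_of_nonneg_ae
      (ae_of_all _ fun u => (Real.exp_pos _).le) hintexp.integrableOn]
    exact lt_of_lt_of_le hpAc (measure_mono fun u hu => ⟨(Real.exp_pos _).ne', hu⟩)
  have hsplit2 := integral_add_compl hA hintexp
  have hmgf : ∫ u, Real.exp (cc * avgCoord n u) ∂unifCube n = (Real.sinh l / l)^n := by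
    have hfun : (fun u : Fin n → ℝ => Real.exp (cc * avgCoord n u))
        = fun u => Real.exp (l * ∑ i, u i) := by
      funext u; congr 1
      rw [hccdef]; unfold avgCoord
      field_simp
    rw [hfun, mgf_prod n l, int_mu0_exp l hl0.ne']
  have hchern : Real.exp (cc*m) * p < (Real.sinh l / l)^n := by
    rw [← hmgf, ← hsplit2]
    linarith
  -- conclude
  have hs1m : (0:ℝ) < 1 - m^2 := by nlinarith
  have hqs : 0 < Real.sqrt (1-m^2) := Real.sqrt_pos.2 hs1m
  have hB0 : 0 < Real.sinh l / l * Real.exp (-(l*m)) :=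
    mul_pos (div_pos (Real.sinh_pos_iff.2 hl0) hl0) (Real.exp_pos _)
  have hBs : Real.sinh l / l * Real.exp (-(l*m)) ≤ Real.sqrt (1-m^2) := by
    rw [div_mul_eq_mul_div, div_le_iff₀ hl0]
    nlinarith [hscal]
  have hpn : p < (Real.sinh l / l * Real.exp (-(l*m)))^n := by
    have hexp_pow : (Real.exp (-(l*m)))^n = Real.exp (-(cc*m)) := by
      rw [← Real.exp_nat_mul]
      congr 1
      rw [hccdef]; ring
    rw [mul_pow, hexp_pow]
    have h10 := mul_lt_mul_of_pos_right hchern (Real.exp_pos (-(cc*m)))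
    have h11 : Real.exp (cc*m) * p * Real.exp (-(cc*m)) = p := by
      rw [mul_comm (Real.exp (cc*m)) p, mul_assoc, ← Real.exp_add]
      simp
    linarith
  have hfinal : p < (Real.sqrt (1-m^2))^n :=
    lt_of_lt_of_le hpn (pow_le_pow_left₀ hB0.le hBs n)
  have h1n : (0:ℝ) < 1/(n:ℝ) := by positivity
  have hrpow := Real.rpow_lt_rpow hp0.le hfinal h1n
  have hpow_eq : ((Real.sqrt (1-m^2))^n : ℝ) ^ ((1:ℝ)/n) = Real.sqrt (1-m^2) := by
    rw [← Real.rpow_natCast (Real.sqrt (1-m^2)) n, ← Real.rpow_mul hqs.le]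
    rw [mul_one_div_cancel (by exact_mod_cast hn.ne' : (n:ℝ) ≠ 0)]
    exact Real.rpow_one _
  rw [hpow_eq] at hrpow
  exact hrpow
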